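/- Let S be an inverse semigroup with zero on which the Lenz relation ≡ is idempotent-pure. Then ≡ is the unique 0-restricted, idempotent-pure, essential congruence on S: for every congruence ρ on S that is 0-restricted, idempotent-pure and essential, and for all a, b ∈ S, ρ a b holds if and only if a ≡ b. -/
import Mathlib


/-- An inverse semigroup with zero. -/
class InverseSemigroupWithZero (S : Type*) extends Semigroup S, Zero S where
  zero_mul : ∀ a : S, 0 * a = 0
  mul_zero : ∀ a : S, a * 0 = 0
  inv : S → S
  mul_inv_mul : ∀ a : S, a * inv a * a = a
  inv_mul_inv : ∀ a : S, inv a * a * inv a = inv a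
  inv_unique : ∀ a b : S, a * b * a = a → b * a * b = b → b = inv a

namespace InverseSemigroupWithZero

variable {S : Type*} [InverseSemigroupWithZero S]

/-- The natural partial order: `a ≤ b` iff `a = b * a⁻¹ * a`. -/
def nle (a b : S) : Prop := a = b * inv a * a

/-- `a ≤_e b`: `a` is essential in `b`. -/
def essIn (a b : S) : Prop :=
  nle a b ∧ ∀ x : S, x ≠ 0 → nle x b → a * inv x * x ≠ 0

/-- The Lenz relation `≡`. -/
def lenz (a b : S) : Prop :=
  (∀ x : S, x ≠ 0 → nle x a → ∃ z : S, z ≠ 0 ∧ nle z x ∧ nle z b) ∧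
  (∀ y : S, y ≠ 0 → nle y b → ∃ z : S, z ≠ 0 ∧ nle z y ∧ nle z a)

end InverseSemigroupWithZero

namespace InverseSemigroupWithZero

variable {S : Type*} [InverseSemigroupWithZero S]

lemma inv_inv' (a : S) : inv (inv a) = a :=
  (inv_unique (inv a) a (inv_mul_inv a) (mul_inv_mul a)).symm

lemma idem_inv {e : S} (he : e * e = e) : inv e = e :=
  (inv_unique e e (by rw [he, he]) (by rw [he, he])).symm

lemma d_idem (a : S) : (inv a * a) * (inv a * a) = inv a * a := by
  rw [mul_assoc, ← mul_assoc a, mul_inv_mul]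

lemma r_idem (a : S) : (a * inv a) * (a * inv a) = a * inv a := by
  rw [mul_assoc, ← mul_assoc (inv a), inv_mul_inv]

lemma mul_idem {e f : S} (he : e * e = e) (hf : f * f = f) :
    (e * f) * (e * f) = e * f := by
  set x := inv (e * f) with hxdef
  have he2 : ∀ y : S, e * (e * y) = e * y := fun y => by rw [← mul_assoc, he]
  have hf2 : ∀ y : S, f * (f * y) = f * y := fun y => by rw [← mul_assoc, hf]
  have hm1 : e * (f * (x * (e * f))) = e * f := by
    have := mul_inv_mul (e * f); simpa only [mul_assoc] using this
  have hm2 : ∀ y : S, e * (f * (x * (e * (f * y)))) = e * (f * y) := fun y => by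
    have := congrArg (· * y) (mul_inv_mul (e * f))
    simpa only [mul_assoc] using this
  have hx1 : x * (e * (f * x)) = x := by
    have := inv_mul_inv (e * f); simpa only [mul_assoc] using this
  have hx2 : ∀ y : S, x * (e * (f * (x * y))) = x * y := fun y => by
    have := congrArg (· * y) (inv_mul_inv (e * f))
    simpa only [mul_assoc] using this
  have key : f * x * e = x := by
    apply inv_unique
    · simp only [mul_assoc, he2, hf2, hm1, hm2, hx1, hx2, he, hf]
    · simp only [mul_assoc, he2, hf2, hm1, hm2, hx1, hx2, he, hf]
  have hxx : x * x = x := by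
    conv_lhs => rw [← key]
    simp only [mul_assoc, hx2]
    rw [← mul_assoc]
    exact key
  have hef : e * f = x := by
    have h2 : inv x = x := idem_inv hxx
    have h3 : inv x = e * f := by rw [hxdef, inv_inv']
    rw [← h3, h2]
  rw [hef, hxx]

lemma idem_comm {e f : S} (he : e * e = e) (hf : f * f = f) :
    e * f = f * e := by
  have hef := mul_idem he hf
  have hfe := mul_idem hf he
  have he2 : ∀ y : S, e * (e * y) = e * y := fun y => by rw [← mul_assoc, he]
  have hf2 : ∀ y : S, f * (f * y) = f * y := fun y => by rw [← mul_assoc, hf]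
  have key : f * e = inv (e * f) := by
    apply inv_unique
    · calc (e * f) * (f * e) * (e * f) = (e * f) * (e * f) := by
            simp only [mul_assoc, he2, hf2]
        _ = e * f := hef
    · calc (f * e) * (e * f) * (f * e) = (f * e) * (f * e) := by
            simp only [mul_assoc, he2, hf2]
        _ = f * e := hfe
  rw [key, idem_inv hef]

lemma inv_mul' (a b : S) : inv (a * b) = inv b * inv a := by
  symm; apply inv_unique
  · calc (a * b) * (inv b * inv a) * (a * b)
        = a * ((b * inv b) * (inv a * a)) * b := by simp only [mul_assoc]
      _ = a * ((inv a * a) * (b * inv b)) * b := by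
            rw [idem_comm (r_idem b) (d_idem a)]
      _ = (a * inv a * a) * ((b * inv b) * b) := by simp only [mul_assoc]
      _ = a * b := by rw [mul_inv_mul a, mul_inv_mul b]
  · calc (inv b * inv a) * (a * b) * (inv b * inv a)
        = inv b * ((inv a * a) * (b * inv b)) * inv a := by simp only [mul_assoc]
      _ = inv b * ((b * inv b) * (inv a * a)) * inv a := by
            rw [idem_comm (d_idem a) (r_idem b)]
      _ = (inv b * b * inv b) * ((inv a * a) * inv a) := by simp only [mul_assoc]
      _ = inv b * inv a := by rw [inv_mul_inv b, inv_mul_inv a]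

lemma nle_zero {z : S} (h : nle z 0) : z = 0 := by
  rw [h, InverseSemigroupWithZero.zero_mul, InverseSemigroupWithZero.zero_mul]

lemma nle_d {a b : S} (h : nle a b) : a * (inv b * b) = a := by
  conv_lhs => rw [h]
  calc (b * inv a * a) * (inv b * b)
      = b * ((inv a * a) * (inv b * b)) := by simp only [mul_assoc]
    _ = b * ((inv b * b) * (inv a * a)) := by rw [idem_comm (d_idem a) (d_idem b)]
    _ = (b * inv b * b) * (inv a * a) := by simp only [mul_assoc]
    _ = b * (inv a * a) := by rw [mul_inv_mul]
    _ = a := by rw [← mul_assoc, ← h]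

lemma d_absorb {a b : S} (h : nle a b) : (inv b * b) * (inv a * a) = inv a * a := by
  have h1 : (inv a * a) * (inv b * b) = inv a * a := by
    rw [mul_assoc, nle_d h]
  rw [idem_comm (d_idem b) (d_idem a), h1]

lemma nle_left {a b : S} (h : nle a b) : a * inv a * b = a := by
  have hinv : inv a = inv a * (a * inv b) := by
    nth_rewrite 1 [h]
    rw [inv_mul', inv_mul', inv_inv']
  conv_lhs => rw [hinv]
  calc a * (inv a * (a * inv b)) * b
      = (a * inv a * a) * (inv b * b) := by simp only [mul_assoc]
    _ = a * (inv b * b) := by rw [mul_inv_mul]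
    _ = a := nle_d h

lemma nle_mul_idem (a : S) {e : S} (he : e * e = e) : nle (a * e) a := by
  show a * e = a * inv (a * e) * (a * e)
  rw [inv_mul', idem_inv he]
  symm
  calc a * (e * inv a) * (a * e)
      = a * (e * ((inv a * a) * e)) := by simp only [mul_assoc]
    _ = a * (e * (e * (inv a * a))) := by rw [idem_comm (d_idem a) he]
    _ = a * (e * (inv a * a)) := by rw [← mul_assoc e e, he]
    _ = a * ((inv a * a) * e) := by rw [idem_comm he (d_idem a)]
    _ = (a * inv a * a) * e := by simp only [mul_assoc]
    _ = a * e := by rw [mul_inv_mul]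

lemma idem_mul_nle {e : S} (he : e * e = e) (a : S) : nle (e * a) a := by
  show e * a = a * inv (e * a) * (e * a)
  rw [inv_mul', idem_inv he]
  symm
  calc a * (inv a * e) * (e * a)
      = (a * inv a) * (e * (e * a)) := by simp only [mul_assoc]
    _ = (a * inv a) * (e * a) := by rw [← mul_assoc e, he]
    _ = ((a * inv a) * e) * a := by rw [← mul_assoc]
    _ = (e * (a * inv a)) * a := by rw [idem_comm (r_idem a) he]
    _ = e * (a * inv a * a) := by simp only [mul_assoc]
    _ = e * a := by rw [mul_inv_mul]

lemma nle_trans {a b c : S} (hab : nle a b) (hbc : nle b c) : nle a c := by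
  have key : c * (inv a * a) = a := by
    calc c * (inv a * a) = c * ((inv b * b) * (inv a * a)) := by rw [d_absorb hab]
      _ = (c * inv b * b) * (inv a * a) := by simp only [mul_assoc]
      _ = b * (inv a * a) := by rw [← hbc]
      _ = a := by rw [← mul_assoc, ← hab]
  show a = c * inv a * a
  rw [mul_assoc, key]

lemma nle_mul_left {a b : S} (h : nle a b) (c : S) : nle (c * a) (c * b) := by
  have h1 : c * a = (c * b) * (inv a * a) := by
    conv_lhs => rw [h]
    simp only [mul_assoc]
  rw [h1]
  exact nle_mul_idem _ (d_idem a)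

lemma nle_mul_right {a b : S} (h : nle a b) (c : S) : nle (a * c) (b * c) := by
  have h1 : a * c = (a * inv a) * (b * c) := by
    rw [← mul_assoc, nle_left h]
  rw [h1]
  exact idem_mul_nle (r_idem a) _

lemma lenz_symm {a b : S} (h : lenz a b) : lenz b a := ⟨h.2, h.1⟩

lemma lenz_half_right {a b : S}
    (h : ∀ x : S, x ≠ 0 → nle x a → ∃ z : S, z ≠ 0 ∧ nle z x ∧ nle z b) (c : S) :
    ∀ x : S, x ≠ 0 → nle x (a * c) → ∃ z : S, z ≠ 0 ∧ nle z x ∧ nle z (b * c) := by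
  intro x hx hxac
  have hxl : x * inv x * (a * c) = x := nle_left hxac
  have hxl' : x * (inv x * (a * c)) = x := by rw [← mul_assoc]; exact hxl
  have hc1 : c * (inv c * c) = c := by rw [← mul_assoc, mul_inv_mul]
  have hci : inv c * (c * inv c) = inv c := by rw [← mul_assoc, inv_mul_inv]
  have h1 : (x * inv c) * c = x := by
    conv_lhs => rw [mul_assoc, ← hxl']
    calc (x * (inv x * (a * c))) * (inv c * c)
        = x * (inv x * (a * (c * (inv c * c)))) := by simp only [mul_assoc]
      _ = x * (inv x * (a * c)) := by rw [hc1]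
      _ = x := hxl'
  have hy0 : x * inv c ≠ 0 := by
    intro h'
    apply hx
    rw [← h1, h', InverseSemigroupWithZero.zero_mul]
  have hya : nle (x * inv c) a := by
    refine nle_trans (nle_mul_right hxac (inv c)) ?_
    have h2 : (a * c) * inv c = a * (c * inv c) := by rw [mul_assoc]
    rw [h2]
    exact nle_mul_idem a (r_idem c)
  obtain ⟨z, hz0, hzy, hzb⟩ := h (x * inv c) hy0 hya
  have hzcx : nle (z * c) x := by
    have := nle_mul_right hzy c
    rwa [h1] at this
  have hzl : z * inv z * (x * inv c) = z := nle_left hzy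
  have h3 : (z * c) * inv c = z := by
    conv_lhs => rw [← hzl]
    calc ((z * inv z * (x * inv c)) * c) * inv c
        = z * (inv z * (x * (inv c * (c * inv c)))) := by simp only [mul_assoc]
      _ = z * (inv z * (x * inv c)) := by rw [hci]
      _ = z := by rw [← mul_assoc z]; exact hzl
  have hzc0 : z * c ≠ 0 := by
    intro h'; apply hz0; rw [← h3, h', InverseSemigroupWithZero.zero_mul]
  exact ⟨z * c, hzc0, hzcx, nle_mul_right hzb c⟩

lemma lenz_mul_right {a b : S} (h : lenz a b) (c : S) : lenz (a * c) (b * c) :=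
  ⟨lenz_half_right h.1 c, lenz_half_right h.2 c⟩

end InverseSemigroupWithZero

open InverseSemigroupWithZero in
/-- If the Lenz relation `≡` is idempotent-pure on `S`, then it is the unique
0-restricted, idempotent-pure, essential congruence on `S`. -/
theorem stmt_15 {S : Type*} [InverseSemigroupWithZero S]
    (hip : ∀ e a : S, e * e = e → lenz e a → a * a = a)
    (ρ : S → S → Prop) (hequiv : Equivalence ρ)
    (hcongl : ∀ a b c : S, ρ a b → ρ (c * a) (c * b))
    (hcongr : ∀ a b c : S, ρ a b → ρ (a * c) (b * c))
    (h0 : ∀ a : S, ρ a 0 → a = 0)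
    (hρip : ∀ e a : S, e * e = e → ρ e a → a * a = a)
    (hess : ∀ a b : S, essIn a b → ρ a b) :
    ∀ a b : S, ρ a b ↔ lenz a b := by
  have half : ∀ a b : S, ρ a b → ∀ x : S, x ≠ 0 → nle x a →
      ∃ z : S, z ≠ 0 ∧ nle z x ∧ nle z b := by
    intro a b hab x hx hxa
    have h2 : a * (inv x * x) = x := by rw [← mul_assoc, ← hxa]
    have hxw : ρ x (b * (inv x * x)) := by
      have h1 := hcongr a b (inv x * x) hab
      rwa [h2] at h1
    have hwx := hequiv.symm hxw
    have hidem : (x * inv (b * (inv x * x))) * (x * inv (b * (inv x * x)))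
        = x * inv (b * (inv x * x)) := by
      exact hρip _ _ (r_idem (b * (inv x * x)))
        (hcongr (b * (inv x * x)) x (inv (b * (inv x * x))) hwx)
    refine ⟨x * (inv (b * (inv x * x)) * (b * (inv x * x))), ?_, ?_, ?_⟩
    · -- z ≠ 0
      intro h'
      apply hx
      apply h0
      have h3 := hcongr x (b * (inv x * x)) (inv (b * (inv x * x)) * (b * (inv x * x))) hxw
      have h4 : (b * (inv x * x)) * (inv (b * (inv x * x)) * (b * (inv x * x)))
          = b * (inv x * x) := by rw [← mul_assoc, mul_inv_mul]
      rw [h4] at h3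
      -- h3 : ρ z (b * (inv x * x)),  hxw : ρ x (b*(inv x*x))
      have h5 : ρ x (x * (inv (b * (inv x * x)) * (b * (inv x * x)))) :=
        hequiv.trans hxw (hequiv.symm h3)
      rw [h'] at h5
      exact h5
    · exact nle_mul_idem x (d_idem (b * (inv x * x)))
    · refine nle_trans ?_ (nle_mul_idem b (d_idem x))
      have h6 : x * (inv (b * (inv x * x)) * (b * (inv x * x)))
          = (x * inv (b * (inv x * x))) * (b * (inv x * x)) := by rw [mul_assoc]
      rw [h6]
      exact idem_mul_nle hidem _
  intro a b
  constructor
  · intro hab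
    exact ⟨half a b hab, half b a (hequiv.symm hab)⟩
  · intro hl
    have h1 : (a * inv b) * (a * inv b) = a * inv b :=
      hip (b * inv b) (a * inv b) (r_idem b) (lenz_symm (lenz_mul_right hl (inv b)))
    have hca : nle (a * inv b * b) a := by
      rw [mul_assoc]
      exact nle_mul_idem a (d_idem b)
    have hcb : nle (a * inv b * b) b := idem_mul_nle h1 b
    have key : ∀ x z : S, nle z x → nle z a → nle z b →
        ((a * inv b * b) * inv x * x) * (inv z * z) = z := by
      intro x z hzx hza hzb
      calc ((a * inv b * b) * inv x * x) * (inv z * z)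
          = a * ((inv b * b) * ((inv x * x) * (inv z * z))) := by simp only [mul_assoc]
        _ = a * ((inv b * b) * (inv z * z)) := by rw [d_absorb hzx]
        _ = a * (inv z * z) := by rw [d_absorb hzb]
        _ = z := by rw [← mul_assoc, ← hza]
    have hea : essIn (a * inv b * b) a := by
      refine ⟨hca, fun x hx hxa => ?_⟩
      obtain ⟨z, hz0, hzx, hzb⟩ := hl.1 x hx hxa
      have hza := nle_trans hzx hxa
      intro h'
      apply hz0
      have hk := key x z hzx hza hzb
      rw [h', InverseSemigroupWithZero.zero_mul] at hk
      exact hk.symm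
    have heb : essIn (a * inv b * b) b := by
      refine ⟨hcb, fun x hx hxb => ?_⟩
      obtain ⟨z, hz0, hzx, hza⟩ := hl.2 x hx hxb
      have hzb := nle_trans hzx hxb
      intro h'
      apply hz0
      have hk := key x z hzx hza hzb
      rw [h', InverseSemigroupWithZero.zero_mul] at hk
      exact hk.symm
    exact hequiv.trans (hequiv.symm (hess _ a hea)) (hess _ b heb)
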